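/- For the generalized Petersen graph P(n,k), corresponding to p₁(z) = z + z⁻¹ and p₂(z) = z^k + z^{−k}, the eigenvalues are ½[ 2cos(2πj/n) + 2cos(2πjk/n) ± √((2cos(2πj/n) − 2cos(2πjk/n))² + 4) ] for j = 0, …, n−1, giving all 2n eigenvalues. -/

import Mathlib

open Finset Matrix Polynomial Kronecker

section aux

variable {n : ℕ} [NeZero n] {ω : ℂ}

lemma aux_pow_val (hω : ω ^ n = 1) (m : ℕ) : ω ^ (ZMod.val (m : ZMod n)) = ω ^ m := by
  conv_rhs => rw [← Nat.div_add_mod m n]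
  rw [pow_add, pow_mul, hω, one_pow, one_mul, ZMod.val_natCast]

lemma aux_chi_add (hω : ω ^ n = 1) (a b : ZMod n) :
    ω ^ (a + b).val = ω ^ a.val * ω ^ b.val := by
  have h : a + b = ((a.val + b.val : ℕ) : ZMod n) := by
    rw [Nat.cast_add, ZMod.natCast_rightInverse a, ZMod.natCast_rightInverse b]
  rw [h, aux_pow_val hω, pow_add]

lemma aux_orth (hprim : IsPrimitiveRoot ω n) (c : ZMod n) :
    ∑ a : ZMod n, ω ^ (a * c).val = if c = 0 then (n : ℂ) else 0 := by
  have hω : ω ^ n = 1 := hprim.pow_eq_one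
  split_ifs with hc
  · subst hc
    simp [ZMod.val_zero, Finset.card_univ, ZMod.card]
  · have key : ω ^ c.val * ∑ a : ZMod n, ω ^ (a * c).val = ∑ a : ZMod n, ω ^ (a * c).val := by
      rw [Finset.mul_sum]
      refine Fintype.sum_equiv (Equiv.addRight (1 : ZMod n)) _ _ fun a => ?_
      have e : (a + 1) * c = a * c + c := by ring
      rw [Equiv.coe_addRight, e, aux_chi_add hω]
      ring
    have hne : ω ^ c.val ≠ 1 := hprim.pow_ne_one_of_pos_of_lt
      (ZMod.val_pos.mpr hc).ne' (ZMod.val_lt c)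
    have h0 : (ω ^ c.val - 1) * ∑ a : ZMod n, ω ^ (a * c).val = 0 := by
      rw [sub_mul, one_mul, key, sub_self]
    rcases mul_eq_zero.mp h0 with h | h
    · exact absurd (sub_eq_zero.mp h) hne
    · exact h

lemma aux_charmatrix_blockDiagonal {R : Type*} [CommRing R] {o m : Type*} [Fintype o]
    [DecidableEq o] [Fintype m] [DecidableEq m] (d : o → Matrix m m R) :
    charmatrix (blockDiagonal d) = blockDiagonal fun g => charmatrix (d g) := by
  ext ⟨i, g⟩ ⟨j, h⟩
  by_cases hgh : g = h
  · subst hgh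
    by_cases hij : i = j
    · subst hij; simp [charmatrix_apply, blockDiagonal_apply, diagonal_apply]
    · simp [charmatrix_apply, blockDiagonal_apply, diagonal_apply, hij, Prod.ext_iff]
  · simp [charmatrix_apply, blockDiagonal_apply, diagonal_apply, hgh, Prod.ext_iff]

lemma aux_charpoly_blockDiagonal {R : Type*} [CommRing R] {o m : Type*} [Fintype o]
    [DecidableEq o] [Fintype m] [DecidableEq m] (d : o → Matrix m m R) :
    (blockDiagonal d).charpoly = ∏ g : o, (d g).charpoly := by
  rw [Matrix.charpoly, aux_charmatrix_blockDiagonal, det_blockDiagonal]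
  rfl

lemma aux_charpoly_conj {m : Type*} [Fintype m] [DecidableEq m]
    (U V N : Matrix m m ℂ) (hUV : U * V = 1) : (U * N * V).charpoly = N.charpoly := by
  have hmapUV : U.map (Polynomial.C : ℂ →+* ℂ[X]) * V.map (Polynomial.C : ℂ →+* ℂ[X]) = 1 := by
    rw [← Matrix.map_mul, hUV, Matrix.map_one _ (map_zero _) (map_one _)]
  have hc : charmatrix (U * N * V) =
      U.map (Polynomial.C : ℂ →+* ℂ[X]) * charmatrix N * V.map (Polynomial.C : ℂ →+* ℂ[X]) := by
    unfold charmatrix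
    have h1 : U.map (Polynomial.C : ℂ →+* ℂ[X]) * Matrix.scalar m (X : ℂ[X])
        = Matrix.scalar m (X : ℂ[X]) * U.map (Polynomial.C : ℂ →+* ℂ[X]) :=
      (Matrix.scalar_commute X (fun r => Commute.all X r) _).eq.symm
    rw [mul_sub, sub_mul, h1, mul_assoc, mul_assoc, hmapUV, mul_one]
    congr 1
    rw [RingHom.mapMatrix_apply, RingHom.mapMatrix_apply, ← Matrix.map_mul, ← Matrix.map_mul]
    rw [mul_assoc]
  rw [Matrix.charpoly, Matrix.charpoly, hc, det_mul, det_mul]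
  have : (U.map (Polynomial.C : ℂ →+* ℂ[X])).det * (charmatrix N).det
      * (V.map (Polynomial.C : ℂ →+* ℂ[X])).det
      = (charmatrix N).det * ((U.map (Polynomial.C : ℂ →+* ℂ[X])
        * V.map (Polynomial.C : ℂ →+* ℂ[X])).det) := by
    rw [det_mul]; ring
  rw [this, hmapUV, det_one, mul_one]

end aux

/-- The eigenvalues of the generalized Petersen graph `P(n,k)`, viewed as the `ℤ_n`-lift
of the two-vertex base graph with `B(z) = [[z + z⁻¹, 1], [1, z^k + z^{-k}]]`, are
`½ [2cos(2πj/n) + 2cos(2πjk/n) ± √((2cos(2πj/n) - 2cos(2πjk/n))² + 4)]`,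
for `j = 0, …, n-1`, giving all `2n` eigenvalues. -/
theorem stmt_18 (n : ℕ) [NeZero n] (k : ℕ)
    (M : Matrix (Fin 2 × ZMod n) (Fin 2 × ZMod n) ℂ)
    (hM00 : ∀ g h : ZMod n, M (0, g) (0, h) =
      (if h = g + 1 then 1 else 0) + (if h = g - 1 then 1 else 0))
    (hM11 : ∀ g h : ZMod n, M (1, g) (1, h) =
      (if h = g + (k : ZMod n) then 1 else 0) + (if h = g - (k : ZMod n) then 1 else 0))
    (hM01 : ∀ g h : ZMod n, M (0, g) (1, h) = if h = g then 1 else 0)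
    (hM10 : ∀ g h : ZMod n, M (1, g) (0, h) = if h = g then 1 else 0) :
    M.charpoly.roots
      = ∑ j ∈ Finset.range n,
          (let c1 : ℝ := 2 * Real.cos (2 * Real.pi * j / n)
           let c2 : ℝ := 2 * Real.cos (2 * Real.pi * j * k / n)
           ({(((c1 + c2 + Real.sqrt ((c1 - c2) ^ 2 + 4)) / 2 : ℝ) : ℂ),
             (((c1 + c2 - Real.sqrt ((c1 - c2) ^ 2 + 4)) / 2 : ℝ) : ℂ)} : Multiset ℂ)) := by
  classical
  have hn : n ≠ 0 := NeZero.ne n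
  set ω : ℂ := Complex.exp (2 * Real.pi * Complex.I / n) with hωdef
  have hprim : IsPrimitiveRoot ω n := Complex.isPrimitiveRoot_exp n hn
  have hω : ω ^ n = 1 := hprim.pow_eq_one
  have hncast : (n : ℂ) ≠ 0 := Nat.cast_ne_zero.mpr hn
  set F : Matrix (ZMod n) (ZMod n) ℂ := Matrix.of (fun g h => ω ^ (g * h).val) with hFdef
  set G : Matrix (ZMod n) (ZMod n) ℂ := Matrix.of (fun g h => ω ^ ((-g) * h).val / n) with hGdef
  have hFG : F * G = 1 := by
    ext g h
    rw [Matrix.mul_apply, Matrix.one_apply]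
    have step : ∀ a : ZMod n, F g a * G a h = ω ^ ((a * (g - h)).val) / n := by
      intro a
      show ω ^ ((g * a).val) * (ω ^ (((-a) * h).val) / n) = _
      have e : a * (g - h) = g * a + (-a) * h := by ring
      rw [e, aux_chi_add hω]; ring
    rw [Finset.sum_congr rfl fun a _ => step a, ← Finset.sum_div, aux_orth hprim]
    by_cases hgh : g = h
    · simp [hgh, sub_self, div_self hncast]
    · have hsub : g - h ≠ 0 := sub_ne_zero.mpr hgh
      simp [hgh, hsub]
  set U := (1 : Matrix (Fin 2) (Fin 2) ℂ) ⊗ₖ F with hUdef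
  set V := (1 : Matrix (Fin 2) (Fin 2) ℂ) ⊗ₖ G with hVdef
  have hUV : U * V = 1 := by
    rw [hUdef, hVdef, ← Matrix.mul_kronecker_mul, Matrix.one_mul, hFG, Matrix.one_kronecker_one]
  set km : ZMod n := (k : ZMod n) with hkm
  set Cmat : ZMod n → Matrix (Fin 2) (Fin 2) ℂ := fun h =>
    !![ω ^ h.val + ω ^ ((-h).val), 1; 1, ω ^ ((km * h).val) + ω ^ ((-(km * h)).val)] with hCdef
  have hMU : M * U = U * blockDiagonal Cmat := by
    ext ⟨p, g⟩ ⟨q, h⟩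
    rw [Matrix.mul_apply, Matrix.mul_apply, Fintype.sum_prod_type, Fintype.sum_prod_type,
      Fin.sum_univ_two, Fin.sum_univ_two]
    have hN : ∀ (r s : Fin 2) (a : ZMod n),
        blockDiagonal Cmat (r, a) (s, h) = if a = h then Cmat a r s else 0 := by
      intro r s a; rw [blockDiagonal_apply]
    simp only [hUdef, kroneckerMap_apply, hN]
    fin_cases p <;> fin_cases q <;>
      simp [hM00, hM01, hM10, hM11, Matrix.one_apply, Matrix.of_apply, hCdef,
        Finset.sum_add_distrib, add_mul, ite_mul, mul_ite, Finset.sum_ite_eq',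
        Fin.mk_zero, Fin.mk_one]
    · show ω ^ ((g + 1) * h).val + ω ^ ((g - 1) * h).val
        = ω ^ ((g * h).val) * (ω ^ h.val + ω ^ ((-h).val))
      rw [show (g + 1) * h = g * h + h from by ring,
        show (g - 1) * h = g * h + -h from by ring, aux_chi_add hω, aux_chi_add hω]
      ring
    · show ω ^ ((g + km) * h).val + ω ^ ((g - km) * h).val
        = ω ^ ((g * h).val) * (ω ^ ((km * h).val) + ω ^ ((-(km * h)).val))
      rw [show (g + km) * h = g * h + km * h from by ring,
        show (g - km) * h = g * h + -(km * h) from by ring, aux_chi_add hω, aux_chi_add hω]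
      ring
  have hMeq : M = U * blockDiagonal Cmat * V := by
    calc M = M * (U * V) := by rw [hUV, mul_one]
    _ = M * U * V := by rw [mul_assoc]
    _ = U * blockDiagonal Cmat * V := by rw [hMU]
  have hcp : M.charpoly = ∏ g : ZMod n, (Cmat g).charpoly := by
    rw [hMeq, aux_charpoly_conj _ _ _ hUV, aux_charpoly_blockDiagonal]
  have hneg : ∀ a : ZMod n, ω ^ ((-a).val) = (ω ^ a.val)⁻¹ := by
    intro a
    have h1 : ω ^ a.val * ω ^ ((-a).val) = 1 := by
      rw [← aux_chi_add hω, add_neg_cancel, ZMod.val_zero, pow_zero]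
    exact (inv_eq_of_mul_eq_one_right h1).symm
  have hexp : ∀ m : ℕ, ω ^ m = Complex.exp (((2 * Real.pi * m / n : ℝ) : ℂ) * Complex.I) := by
    intro m
    rw [hωdef, ← Complex.exp_nat_mul]
    congr 1
    push_cast
    ring
  have hcos : ∀ m : ℕ, ω ^ m + (ω ^ m)⁻¹ = ((2 * Real.cos (2 * Real.pi * m / n) : ℝ) : ℂ) := by
    intro m
    rw [hexp m, ← Complex.exp_neg]
    push_cast
    rw [Complex.cos, neg_mul]
    ring
  have hquadform : ∀ a : ZMod n, (Cmat a).charpoly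
      = (X - Polynomial.C (Cmat a 0 0)) * (X - Polynomial.C (Cmat a 1 1)) - 1 := by
    intro a
    rw [Matrix.charpoly, Matrix.det_fin_two, charmatrix_apply_eq, charmatrix_apply_eq,
      charmatrix_apply_ne _ _ _ (by decide), charmatrix_apply_ne _ _ _ (by decide)]
    have h01 : Cmat a 0 1 = 1 := by simp [hCdef]
    have h10 : Cmat a 1 0 = 1 := by simp [hCdef]
    rw [h01, h10, _root_.map_one]
    ring
  set c1 : ℕ → ℝ := fun j => 2 * Real.cos (2 * Real.pi * j / n) with hc1
  set c2 : ℕ → ℝ := fun j => 2 * Real.cos (2 * Real.pi * j * k / n) with hc2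
  set sq : ℕ → ℝ := fun j => Real.sqrt ((c1 j - c2 j) ^ 2 + 4) with hsq
  set lp : ℕ → ℝ := fun j => (c1 j + c2 j + sq j) / 2 with hlp
  set lm : ℕ → ℝ := fun j => (c1 j + c2 j - sq j) / 2 with hlm
  have hfact : ∀ j, j < n → (Cmat ((j : ZMod n))).charpoly
      = (X - Polynomial.C ((lp j : ℝ) : ℂ)) * (X - Polynomial.C ((lm j : ℝ) : ℂ)) := by
    intro j hj
    have hg : ((j : ZMod n)).val = j := ZMod.val_cast_of_lt hj
    have hA : Cmat (j : ZMod n) 0 0 = ((c1 j : ℝ) : ℂ) := by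
      show ω ^ ((j : ZMod n)).val + ω ^ ((-(j : ZMod n)).val) = _
      rw [hneg, hg, hcos j]
    have hkj : km * (j : ZMod n) = ((k * j : ℕ) : ZMod n) := by
      rw [hkm, Nat.cast_mul]
    have hB : Cmat (j : ZMod n) 1 1 = ((c2 j : ℝ) : ℂ) := by
      show ω ^ ((km * (j : ZMod n)).val) + ω ^ ((-(km * (j : ZMod n))).val) = _
      rw [hneg, hkj, aux_pow_val hω, hcos (k * j)]
      norm_cast
      congr 2
      push_cast
      ring
    have hs2 : sq j ^ 2 = (c1 j - c2 j) ^ 2 + 4 := Real.sq_sqrt (by positivity)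
    have hsum : lp j + lm j = c1 j + c2 j := by
      show (c1 j + c2 j + sq j) / 2 + (c1 j + c2 j - sq j) / 2 = _
      ring
    have hprod : lp j * lm j = c1 j * c2 j - 1 := by
      show (c1 j + c2 j + sq j) / 2 * ((c1 j + c2 j - sq j) / 2) = _
      have e : (c1 j + c2 j + sq j) / 2 * ((c1 j + c2 j - sq j) / 2)
          = ((c1 j + c2 j) ^ 2 - sq j ^ 2) / 4 := by ring
      rw [e, hs2]
      ring
    have e1 : Polynomial.C ((c1 j : ℝ) : ℂ) + Polynomial.C ((c2 j : ℝ) : ℂ)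
        = Polynomial.C ((lp j : ℝ) : ℂ) + Polynomial.C ((lm j : ℝ) : ℂ) := by
      rw [← _root_.map_add, ← _root_.map_add]
      congr 1
      rw [← Complex.ofReal_add, ← Complex.ofReal_add, hsum]
    have e2 : Polynomial.C ((c1 j : ℝ) : ℂ) * Polynomial.C ((c2 j : ℝ) : ℂ) - 1
        = Polynomial.C ((lp j : ℝ) : ℂ) * Polynomial.C ((lm j : ℝ) : ℂ) := by
      have hcast : ((lp j : ℝ) : ℂ) * ((lm j : ℝ) : ℂ) = ((c1 j : ℝ) : ℂ) * ((c2 j : ℝ) : ℂ) - 1 := by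
        exact_mod_cast congrArg (fun x : ℝ => (x : ℂ)) hprod
      symm
      rw [← _root_.map_mul, hcast, map_sub, _root_.map_mul, _root_.map_one]
    rw [hquadform, hA, hB]
    calc (X - Polynomial.C ((c1 j : ℝ) : ℂ)) * (X - Polynomial.C ((c2 j : ℝ) : ℂ)) - 1
        = X ^ 2 - (Polynomial.C ((c1 j : ℝ) : ℂ) + Polynomial.C ((c2 j : ℝ) : ℂ)) * X
          + (Polynomial.C ((c1 j : ℝ) : ℂ) * Polynomial.C ((c2 j : ℝ) : ℂ) - 1) := by ring
      _ = X ^ 2 - (Polynomial.C ((lp j : ℝ) : ℂ) + Polynomial.C ((lm j : ℝ) : ℂ)) * X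
          + Polynomial.C ((lp j : ℝ) : ℂ) * Polynomial.C ((lm j : ℝ) : ℂ) := by rw [e1, e2]
      _ = (X - Polynomial.C ((lp j : ℝ) : ℂ)) * (X - Polynomial.C ((lm j : ℝ) : ℂ)) := by ring
  have key : M.charpoly = ∏ j ∈ Finset.range n,
      ((X - Polynomial.C ((lp j : ℝ) : ℂ)) * (X - Polynomial.C ((lm j : ℝ) : ℂ))) := by
    rw [hcp]
    refine Finset.prod_bij' (fun (g : ZMod n) _ => g.val) (fun m _ => ((m : ZMod n)))
      (fun g _ => Finset.mem_range.mpr (ZMod.val_lt g)) (fun m _ => Finset.mem_univ _)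
      (fun g _ => ZMod.natCast_rightInverse g) (fun m hm => ZMod.val_cast_of_lt (Finset.mem_range.mp hm))
      (fun g _ => ?_)
    have := hfact g.val (ZMod.val_lt g)
    rwa [ZMod.natCast_rightInverse g] at this
  have hne : (∏ j ∈ Finset.range n,
      ((X - Polynomial.C ((lp j : ℝ) : ℂ)) * (X - Polynomial.C ((lm j : ℝ) : ℂ)))) ≠ 0 :=
    Finset.prod_ne_zero_iff.mpr fun j _ =>
      mul_ne_zero (X_sub_C_ne_zero _) (X_sub_C_ne_zero _)
  have hr : ∀ a b : ℂ, ((X - Polynomial.C a) * (X - Polynomial.C b)).roots = {a, b} := by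
    intro a b
    rw [Polynomial.roots_mul (mul_ne_zero (X_sub_C_ne_zero a) (X_sub_C_ne_zero b)),
      roots_X_sub_C, roots_X_sub_C]
    rfl
  rw [key, Polynomial.roots_prod _ _ hne]
  show ((Finset.range n).val.bind
      fun j => ((X - Polynomial.C ((lp j : ℝ) : ℂ)) * (X - Polynomial.C ((lm j : ℝ) : ℂ))).roots)
    = ∑ j ∈ Finset.range n, ({((lp j : ℝ) : ℂ), ((lm j : ℝ) : ℂ)} : Multiset ℂ)
  calc ((Finset.range n).val.bind
      fun j => ((X - Polynomial.C ((lp j : ℝ) : ℂ)) * (X - Polynomial.C ((lm j : ℝ) : ℂ))).roots)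
      = (Finset.range n).val.bind fun j => ({((lp j : ℝ) : ℂ), ((lm j : ℝ) : ℂ)} : Multiset ℂ) := by
        exact Multiset.bind_congr fun j _ => hr _ _
    _ = ∑ j ∈ Finset.range n, ({((lp j : ℝ) : ℂ), ((lm j : ℝ) : ℂ)} : Multiset ℂ) := rfl
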